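/- For every n ≥ 1 and every b < 2^n, T^[n](b + 2^n) = T^[n](b) + 3^(m(b,n)), where m(b,n) counts the odd terms among b, T(b), ..., T^[n-1](b). -/

import Mathlib

def T (N : ℕ) : ℕ := if N % 2 = 0 then N / 2 else (3 * N + 1) / 2

def m (b n : ℕ) : ℕ := ((Finset.range n).filter (fun k => Odd (T^[k] b))).card

lemma m_one (b : ℕ) : m b 1 = if Odd b then 1 else 0 := by
  simp [m, Finset.range_one, Finset.filter_singleton, apply_ite Finset.card]
  split_ifs with h <;> simp [h]

lemma m_succ (b n : ℕ) : m b (n + 1) = m (T b) n + (if Odd b then 1 else 0) := by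
  simp only [m, Finset.card_filter]
  rw [Finset.sum_range_succ']
  simp [Function.iterate_succ_apply]
  rw [Finset.card_filter]
  rfl

lemma T_even {b : ℕ} (h : b % 2 = 0) (c : ℕ) : T (b + 2 * c) = b / 2 + c := by
  unfold T; rw [if_pos (by omega)]; omega

lemma T_odd {b : ℕ} (h : b % 2 = 1) (c : ℕ) : T (b + 2 * c) = (3 * b + 1) / 2 + 3 * c := by
  unfold T; rw [if_neg (by omega)]; omega

lemma T_even' {b : ℕ} (h : b % 2 = 0) : T b = b / 2 := by
  unfold T; rw [if_pos h]

lemma T_odd' {b : ℕ} (h : b % 2 = 1) : T b = (3 * b + 1) / 2 := by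
  unfold T; rw [if_neg (by omega)]

lemma key : ∀ n, 1 ≤ n → ∀ b j, T^[n] (b + 3 ^ j * 2 ^ n) = T^[n] b + 3 ^ (j + m b n) := by
  intro n hn
  induction n, hn using Nat.le_induction with
  | base =>
    intro b j
    have h2 : 3 ^ j * 2 ^ 1 = 2 * 3 ^ j := by ring
    rw [h2, Function.iterate_one]
    rcases Nat.mod_two_eq_zero_or_one b with h | h
    · have hm : m b 1 = 0 := by
        rw [m_one, if_neg]; simp [Nat.odd_iff, h]
      rw [T_even h, T_even' h, hm]
      ring
    · have hm : m b 1 = 1 := by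
        rw [m_one, if_pos]; simp [Nat.odd_iff, h]
      rw [T_odd h, T_odd' h, hm, pow_succ]
      ring
  | succ n hn ih =>
    intro b j
    have h2 : 3 ^ j * 2 ^ (n + 1) = 2 * (3 ^ j * 2 ^ n) := by ring
    rw [h2, Function.iterate_succ_apply, Function.iterate_succ_apply]
    rcases Nat.mod_two_eq_zero_or_one b with h | h
    · have hm : m b (n + 1) = m (T b) n := by
        rw [m_succ, if_neg (by simp [Nat.odd_iff, h])]; ring
      rw [T_even h, ← T_even' h, ih (T b) j, hm]
    · have hm : m b (n + 1) = m (T b) n + 1 := by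
        rw [m_succ, if_pos]; simp [Nat.odd_iff, h]
      have h3 : T b + 3 ^ (j + 1) * 2 ^ n = (3 * b + 1) / 2 + 3 * (3 ^ j * 2 ^ n) := by
        rw [T_odd' h, pow_succ]; ring
      rw [T_odd h, ← h3, ih (T b) (j + 1), hm]
      ring_nf

theorem stmt2 : ∀ n ≥ 1, ∀ b < 2 ^ n,
    T^[n] (b + 2 ^ n) = T^[n] b + 3 ^ m b n := by
  intro n hn b _
  have := key n hn b 0
  simpa using this
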